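/- arXiv:2605.26659 — 3 statements merged into one kernel-verified Lean document; each statement's English description precedes it below -/
import Mathlib

section
/- Let ε > 0, let x_1 < ... < x_N and y_1 < ... < y_N be strictly increasing real tuples with dividing index ζ, and let K_U = [k̂_{ij}] be the upper block of the kernel matrix. Then for all indices 1 ≤ i_1 ≤ i_2 ≤ N and all ζ(i_2) < j ≤ N, the entries satisfy k̂_{i_1 j} = exp(-(x_{i_2} - x_{i_1})/ε) · k̂_{i_2 j}; in particular the ratio k̂_{i_1 j} / k̂_{i_2 j} does not depend on j. -/
/-- Quasi-collinearity of the upper block `K_U` of the kernel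
matrix (1-based indexing): for `1 ≤ i₁ ≤ i₂ ≤ N` and `ζ i₂ < j ≤ N`, the
entries satisfy `KU i₁ j = exp(-(x i₂ - x i₁)/ε) * KU i₂ j`, a ratio
independent of `j`. -/
theorem upper_block_quasi_collinear
    (N : ℕ) (ε : ℝ) (hε : 0 < ε) (x y : ℕ → ℝ)
    (hx : ∀ i j, 1 ≤ i → i < j → j ≤ N → x i < x j)
    (hy : ∀ i j, 1 ≤ i → i < j → j ≤ N → y i < y j)
    (ζ : ℕ → ℕ)
    (hζ : ∀ i, 1 ≤ i → i ≤ N →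
      (x i < y 1 → ζ i = 0) ∧
      (y N ≤ x i → ζ i = N) ∧
      (y 1 ≤ x i → x i < y N →
        (1 ≤ ζ i ∧ ζ i + 1 ≤ N) ∧ y (ζ i) ≤ x i ∧ x i < y (ζ i + 1)))
    (KU : ℕ → ℕ → ℝ)
    (hKU : ∀ i j, KU i j = if j ≤ ζ i then 0 else Real.exp (-|x i - y j| / ε)) :
    ∀ i₁ i₂ j, 1 ≤ i₁ → i₁ ≤ i₂ → i₂ ≤ N → ζ i₂ < j → j ≤ N →
      KU i₁ j = Real.exp (-(x i₂ - x i₁) / ε) * KU i₂ j := by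
  intro i₁ i₂ j h1 h12 h2N hζj hjN
  have hi₂1 : 1 ≤ i₂ := le_trans h1 h12
  have hi₁N : i₁ ≤ N := le_trans h12 h2N
  have hx12 : x i₁ ≤ x i₂ := by
    rcases eq_or_lt_of_le h12 with h | h
    · rw [h]
    · exact le_of_lt (hx i₁ i₂ h1 h h2N)
  have hj1 : 1 ≤ j := lt_of_le_of_lt (Nat.zero_le _) hζj
  have hymono : ∀ a b, 1 ≤ a → a ≤ b → b ≤ N → y a ≤ y b := by
    intro a b ha hab hbN
    rcases eq_or_lt_of_le hab with h | h
    · rw [h]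
    · exact le_of_lt (hy a b ha h hbN)
  have h2 := hζ i₂ hi₂1 h2N
  have hx2yj : x i₂ < y j := by
    by_cases hc : x i₂ < y 1
    · exact lt_of_lt_of_le hc (hymono 1 j le_rfl hj1 hjN)
    · push_neg at hc
      by_cases hc2 : x i₂ < y N
      · obtain ⟨⟨hζ1, hζN⟩, hl, hr⟩ := h2.2.2 hc hc2
        exact lt_of_lt_of_le hr
          (hymono (ζ i₂ + 1) j (Nat.succ_le_succ (Nat.zero_le _)) hζj hjN)
      · push_neg at hc2
        have := h2.2.1 hc2
        omega
  have hx1yj : x i₁ < y j := lt_of_le_of_lt hx12 hx2yj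
  have hζ1j : ζ i₁ < j := by
    have h1' := hζ i₁ h1 hi₁N
    by_cases hc : x i₁ < y 1
    · rw [h1'.1 hc]; exact hj1
    · push_neg at hc
      have hx1N : x i₁ < y N := lt_of_lt_of_le hx1yj (hymono j N hj1 hjN le_rfl)
      obtain ⟨⟨ha, hb⟩, hl, hr⟩ := h1'.2.2 hc hx1N
      by_contra hcon
      push_neg at hcon
      have : y j ≤ y (ζ i₁) := hymono j (ζ i₁) hj1 hcon (by omega)
      linarith
  rw [hKU, hKU, if_neg (by omega), if_neg (by omega),
    abs_of_neg (by linarith : x i₁ - y j < 0),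
    abs_of_neg (by linarith : x i₂ - y j < 0), ← Real.exp_add]
  congr 1
  field_simp
  ring
end

section
/- (Vector representation of K_U.) Let ε > 0, let x_1 < ... < x_N and y_1 < ... < y_N be strictly increasing real tuples with dividing index ζ (with the convention ζ(N+1) = N), and let K_U = [k̂_{ij}] be the upper block of the kernel matrix. Define the ratios r'_t = exp(-(x_{t+1} - x_t)/ε) for t = 1, ..., N-1. Then for all indices 1 ≤ i ≤ s ≤ N and all j with ζ(s) < j ≤ ζ(s+1), one has k̂_{ij} = (∏_{t=i}^{s-1} r'_t) · exp(-(y_j - x_s)/ε). Consequently K_U is completely determined by the ratio vector (r'_1, ..., r'_{N-1}) together with the block-edge vectors η'_i = (k̂_{i, ζ(i)+1}, ..., k̂_{i, ζ(i+1)}) for i = 1, ..., N. -/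
/-- Vector representation of `K_U`: with the dividing index `ζ`
(convention `ζ (N+1) = N`, 1-based indexing) and ratios
`r' t = exp(-(x (t+1) - x t)/ε)`, every entry of the upper block with
`1 ≤ i ≤ s ≤ N` and `ζ s < j ≤ ζ (s+1)` satisfies
`KU i j = (∏_{t=i}^{s-1} r' t) * exp(-(y j - x s)/ε)`, so that `K_U` is
completely determined by the ratio vector and the block-edge vectors. -/
theorem upper_block_vector_representation
    (N : ℕ) (ε : ℝ) (hε : 0 < ε) (x y : ℕ → ℝ)
    (hx : ∀ i j, 1 ≤ i → i < j → j ≤ N → x i < x j)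
    (hy : ∀ i j, 1 ≤ i → i < j → j ≤ N → y i < y j)
    (ζ : ℕ → ℕ) (hζN1 : ζ (N + 1) = N)
    (hζ : ∀ i, 1 ≤ i → i ≤ N →
      (x i < y 1 → ζ i = 0) ∧
      (y N ≤ x i → ζ i = N) ∧
      (y 1 ≤ x i → x i < y N →
        (1 ≤ ζ i ∧ ζ i + 1 ≤ N) ∧ y (ζ i) ≤ x i ∧ x i < y (ζ i + 1)))
    (KU : ℕ → ℕ → ℝ)
    (hKU : ∀ i j, KU i j = if j ≤ ζ i then 0 else Real.exp (-|x i - y j| / ε))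
    (r' : ℕ → ℝ)
    (hr' : ∀ t, 1 ≤ t → t ≤ N - 1 → r' t = Real.exp (-(x (t + 1) - x t) / ε)) :
    ∀ i s j, 1 ≤ i → i ≤ s → s ≤ N → ζ s < j → j ≤ ζ (s + 1) →
      KU i j = (∏ t ∈ Finset.Ico i s, r' t) * Real.exp (-(y j - x s) / ε) := by
  intro i s j hi his hsN hj1 hj2
  have hsi : 1 ≤ s := le_trans hi his
  -- ζ k ≤ N for 1 ≤ k ≤ N
  have hζle : ∀ k, 1 ≤ k → k ≤ N → ζ k ≤ N := by
    intro k hk1 hkN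
    obtain ⟨h0, hN, hm⟩ := hζ k hk1 hkN
    rcases lt_or_ge (x k) (y 1) with h | h
    · simp [h0 h]
    rcases le_or_gt (y N) (x k) with h' | h'
    · simp [hN h']
    · exact le_trans (Nat.le_succ _) ((hm h h').1.2)
  have hjN : j ≤ N := by
    rcases eq_or_lt_of_le hsN with rfl | hlt
    · simpa [hζN1] using hj2
    · exact le_trans hj2 (hζle (s + 1) (by omega) hlt)
  have hj1' : 1 ≤ j := by omega
  -- x s < y j
  have hxsyj : x s < y j := by
    obtain ⟨h0, hN, hm⟩ := hζ s hsi hsN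
    rcases lt_or_ge (x s) (y 1) with h | h
    · rcases eq_or_lt_of_le hj1' with hh | hh
      · exact hh ▸ h
      · exact lt_trans h (hy 1 j le_rfl hh hjN)
    rcases le_or_gt (y N) (x s) with h' | h'
    · exfalso; rw [hN h'] at hj1; omega
    · obtain ⟨⟨hz1, hz2⟩, _, hlt⟩ := hm h h'
      rcases eq_or_lt_of_le (Nat.succ_le_of_lt hj1) with hh | hh
      · exact hh ▸ hlt
      · exact lt_trans hlt (hy (ζ s + 1) j (by omega) hh hjN)
  have hxixs : x i ≤ x s := by
    rcases eq_or_lt_of_le his with rfl | hlt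
    · exact le_rfl
    · exact le_of_lt (hx i s hi hlt hsN)
  have hxiyj : x i < y j := lt_of_le_of_lt hxixs hxsyj
  -- j > ζ i
  have hjζi : ζ i < j := by
    obtain ⟨h0, hN, hm⟩ := hζ i hi (le_trans his hsN)
    rcases lt_or_ge (x i) (y 1) with h | h
    · rw [h0 h]; omega
    rcases le_or_gt (y N) (x i) with h' | h'
    · exfalso
      have : y N ≤ x s := le_trans h' hxixs
      obtain ⟨_, hN', _⟩ := hζ s hsi hsN
      rw [hN' this] at hj1; omega
    · obtain ⟨⟨hz1, hz2⟩, hle, _⟩ := hm h h'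
      by_contra hcon
      push_neg at hcon
      have hyj : y j ≤ y (ζ i) := by
        rcases eq_or_lt_of_le hcon with rfl | hh
        · exact le_rfl
        · exact le_of_lt (hy j (ζ i) hj1' hh (by omega))
      exact absurd (lt_of_lt_of_le hxiyj (le_trans hyj hle)) (lt_irrefl _)
  -- KU value
  have hKUval : KU i j = Real.exp (-(y j - x i) / ε) := by
    rw [hKU, if_neg (by omega)]
    congr 1
    rw [abs_of_neg (by linarith)]
    ring
  -- telescoping product
  have key : ∀ m, i ≤ m → m ≤ N → ∏ t ∈ Finset.Ico i m, r' t
      = Real.exp (-(x m - x i) / ε) := by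
    intro m hm
    induction m, hm using Nat.le_induction with
    | base => intro _; simp
    | succ m hm ih =>
      intro hmN
      rw [Finset.prod_Ico_succ_top hm, ih (by omega),
        hr' m (le_trans hi hm) (by omega), ← Real.exp_add]
      congr 1
      ring
  rw [hKUval, key s his hsN, ← Real.exp_add]
  congr 1
  ring
end

section
/- (Backward recursion for the upper block.) Let ε > 0, let x_1 < ... < x_N and y_1 < ... < y_N be strictly increasing real tuples with dividing index ζ, and let ψ ∈ ℝ^N. For i = 1, ..., N define q_i = Σ_{j=ζ(i)+1}^{N} exp(-(y_j - x_i)/ε) ψ_j. Then for every i = 1, ..., N-1, q_i = exp(-(x_{i+1} - x_i)/ε) · q_{i+1} + Σ_{j=ζ(i)+1}^{ζ(i+1)} exp(-(y_j - x_i)/ε) ψ_j. -/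
/-- Backward recursion for the upper block: with the dividing
index `ζ` (1-based indexing) and
`q i = ∑_{j=ζ i + 1}^{N} exp(-(y j - x i)/ε) ψ j`, one has, for `1 ≤ i ≤ N-1`,
`q i = exp(-(x (i+1) - x i)/ε) * q (i+1)
  + ∑_{j=ζ i + 1}^{ζ (i+1)} exp(-(y j - x i)/ε) ψ j`. -/
theorem upper_block_backward_recursion
    (N : ℕ) (ε : ℝ) (hε : 0 < ε) (x y : ℕ → ℝ)
    (hx : ∀ i j, 1 ≤ i → i < j → j ≤ N → x i < x j)
    (hy : ∀ i j, 1 ≤ i → i < j → j ≤ N → y i < y j)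
    (ζ : ℕ → ℕ)
    (hζ : ∀ i, 1 ≤ i → i ≤ N →
      (x i < y 1 → ζ i = 0) ∧
      (y N ≤ x i → ζ i = N) ∧
      (y 1 ≤ x i → x i < y N →
        (1 ≤ ζ i ∧ ζ i + 1 ≤ N) ∧ y (ζ i) ≤ x i ∧ x i < y (ζ i + 1)))
    (ψ : ℕ → ℝ) (q : ℕ → ℝ)
    (hq : ∀ i, 1 ≤ i → i ≤ N →
      q i = ∑ j ∈ Finset.Icc (ζ i + 1) N, Real.exp (-(y j - x i) / ε) * ψ j) :
    ∀ i, 1 ≤ i → i + 1 ≤ N →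
      q i = Real.exp (-(x (i + 1) - x i) / ε) * q (i + 1) +
        ∑ j ∈ Finset.Icc (ζ i + 1) (ζ (i + 1)),
          Real.exp (-(y j - x i) / ε) * ψ j := by
  intro i hi hiN
  have hi1 : 1 ≤ i + 1 := Nat.le_succ_of_le hi
  have hxlt : x i < x (i + 1) := hx i (i + 1) hi (Nat.lt_succ_self i) hiN
  obtain ⟨h0, hN, hmid⟩ := hζ i hi (le_trans (Nat.le_succ i) hiN)
  obtain ⟨h0', hN', hmid'⟩ := hζ (i + 1) hi1 hiN
  have hζN : ζ (i + 1) ≤ N := by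
    rcases lt_or_ge (x (i + 1)) (y 1) with h | h1
    · simp [h0' h]
    rcases le_or_gt (y N) (x (i + 1)) with h | h
    · simp [hN' h]
    · exact le_trans (Nat.le_succ _) (hmid' h1 h).1.2
  have hmono : ζ i ≤ ζ (i + 1) := by
    rcases lt_or_ge (x i) (y 1) with h | h1
    · simp [h0 h]
    rcases le_or_gt (y N) (x i) with h | h
    · have h2 := hN h
      have h3 := hN' (le_trans h (le_of_lt hxlt))
      omega
    obtain ⟨⟨hζ1, hζ2⟩, hyle, hylt⟩ := hmid h1 h
    rcases le_or_gt (y N) (x (i + 1)) with h' | h'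
    · rw [hN' h']; omega
    obtain ⟨⟨hζ1', hζ2'⟩, hyle', hylt'⟩ := hmid' (le_trans h1 (le_of_lt hxlt)) h'
    by_contra hc
    push_neg at hc
    have hle : ζ (i + 1) + 1 ≤ ζ i := hc
    have hy' : y (ζ (i + 1) + 1) ≤ y (ζ i) := by
      rcases eq_or_lt_of_le hle with he | hl
      · rw [he]
      · exact le_of_lt (hy _ _ (by omega) hl (by omega))
    linarith
  rw [hq i hi (le_trans (Nat.le_succ i) hiN), hq (i + 1) hi1 hiN]
  rw [Finset.Icc_add_one_left_eq_Ioc, Finset.Icc_add_one_left_eq_Ioc, Finset.Icc_add_one_left_eq_Ioc]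
  rw [← Finset.sum_Ioc_consecutive _ hmono hζN]
  rw [Finset.mul_sum]
  rw [add_comm]
  congr 1
  apply Finset.sum_congr rfl
  intro j hj
  rw [← mul_assoc, ← Real.exp_add]
  congr 2
  field_simp
  ring
end
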